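/- (Fixed-time settling bound, classical case.) Let $V : [0,\infty) \to [0,\infty)$ be differentiable and satisfy $V'(t) \leq -a V(t)^p - b V(t)^q$ for all $t$, where $a, b > 0$, $0 < p < 1$, $q > 1$. Then for every initial value $V(0) \geq 0$, there exists $T \leq \frac{1}{a(1-p)} + \frac{1}{b(q-1)}$ such that $V(T) = 0$. -/

import Mathlib

open Real

private lemma rpowHasDeriv (V : ℝ → ℝ) (hdiff : Differentiable ℝ V) (e t : ℝ)
    (ht : V t ≠ 0) :
    HasDerivAt (fun s => V s ^ e) (deriv V t * e * V t ^ (e - 1)) t :=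
  (hdiff t).hasDerivAt.rpow_const (Or.inl ht)

private lemma keyLe (V : ℝ → ℝ) (hdiff : Differentiable ℝ V) (e c s u : ℝ) (hsu : s ≤ u)
    (hpos : ∀ t ∈ Set.Icc s u, V t ≠ 0)
    (hder : ∀ t ∈ Set.Icc s u, deriv V t * e * V t ^ (e - 1) ≤ c) :
    V u ^ e - V s ^ e ≤ c * (u - s) := by
  set H : ℝ → ℝ := fun t => c * t - V t ^ e with hH
  have hmono : MonotoneOn H (Set.Icc s u) := by
    have hHder : ∀ t ∈ Set.Icc s u,
        HasDerivAt H (c - deriv V t * e * V t ^ (e - 1)) t := by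
      intro t ht
      have h0 : HasDerivAt (fun x : ℝ => c * x) c t := by
        simpa using (hasDerivAt_id t).const_mul c
      exact h0.sub (rpowHasDeriv V hdiff e t (hpos t ht))
    apply monotoneOn_of_deriv_nonneg (convex_Icc s u)
    · intro t ht
      exact (hHder t ht).continuousAt.continuousWithinAt
    · intro t ht
      rw [interior_Icc] at ht
      exact (hHder t (Set.Ioo_subset_Icc_self ht)).differentiableAt.differentiableWithinAt
    · intro t ht
      rw [interior_Icc] at ht
      rw [(hHder t (Set.Ioo_subset_Icc_self ht)).deriv]
      have := hder t (Set.Ioo_subset_Icc_self ht)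
      linarith
  have := hmono (Set.left_mem_Icc.2 hsu) (Set.right_mem_Icc.2 hsu) hsu
  simp only [hH] at this
  linarith

private lemma keyGe (V : ℝ → ℝ) (hdiff : Differentiable ℝ V) (e c s u : ℝ) (hsu : s ≤ u)
    (hpos : ∀ t ∈ Set.Icc s u, V t ≠ 0)
    (hder : ∀ t ∈ Set.Icc s u, c ≤ deriv V t * e * V t ^ (e - 1)) :
    c * (u - s) ≤ V u ^ e - V s ^ e := by
  set H : ℝ → ℝ := fun t => V t ^ e - c * t with hH
  have hmono : MonotoneOn H (Set.Icc s u) := by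
    have hHder : ∀ t ∈ Set.Icc s u,
        HasDerivAt H (deriv V t * e * V t ^ (e - 1) - c) t := by
      intro t ht
      have h0 : HasDerivAt (fun x : ℝ => c * x) c t := by
        simpa using (hasDerivAt_id t).const_mul c
      exact (rpowHasDeriv V hdiff e t (hpos t ht)).sub h0
    apply monotoneOn_of_deriv_nonneg (convex_Icc s u)
    · intro t ht
      exact (hHder t ht).continuousAt.continuousWithinAt
    · intro t ht
      rw [interior_Icc] at ht
      exact (hHder t (Set.Ioo_subset_Icc_self ht)).differentiableAt.differentiableWithinAt
    · intro t ht
      rw [interior_Icc] at ht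
      rw [(hHder t (Set.Ioo_subset_Icc_self ht)).deriv]
      have := hder t (Set.Ioo_subset_Icc_self ht)
      linarith
  have := hmono (Set.left_mem_Icc.2 hsu) (Set.right_mem_Icc.2 hsu) hsu
  simp only [hH] at this
  linarith

theorem stmt6 (a b p q : ℝ) (ha : 0 < a) (hb : 0 < b) (hp0 : 0 < p) (hp1 : p < 1)
    (hq : 1 < q) (V : ℝ → ℝ) (hdiff : Differentiable ℝ V)
    (hnn : ∀ t, 0 ≤ t → 0 ≤ V t)
    (hineq : ∀ t, 0 ≤ t → deriv V t ≤ -a * (V t) ^ p - b * (V t) ^ q) :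
    ∃ T, 0 ≤ T ∧ T ≤ 1 / (a * (1 - p)) + 1 / (b * (q - 1)) ∧ V T = 0 := by
  have hq1 : 0 < q - 1 := by linarith
  have hp1' : 0 < 1 - p := by linarith
  set T₁ : ℝ := 1 / (b * (q - 1)) with hT₁
  set T₂ : ℝ := 1 / (a * (1 - p)) with hT₂
  have hT₁pos : 0 < T₁ := by positivity
  have hT₂pos : 0 < T₂ := by positivity
  -- Phase 1: there is t₁ ∈ [0, T₁] with V t₁ ≤ 1
  have phase1 : ∃ t₁ ∈ Set.Icc (0:ℝ) T₁, V t₁ ≤ 1 := by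
    by_contra h
    push_neg at h
    have hgt : ∀ t ∈ Set.Icc (0:ℝ) T₁, 1 < V t := h
    have hpos : ∀ t ∈ Set.Icc (0:ℝ) T₁, V t ≠ 0 := fun t ht => by
      have := hgt t ht; linarith
    have hder : ∀ t ∈ Set.Icc (0:ℝ) T₁,
        b * (q - 1) ≤ deriv V t * (1 - q) * V t ^ ((1 - q) - 1) := by
      intro t ht
      have hVpos : 0 < V t := lt_trans one_pos (hgt t ht)
      have h1 : deriv V t ≤ -b * V t ^ q := by
        have := hineq t ht.1
        have hap : 0 < a * V t ^ p := by positivity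
        linarith
      have h2 : 0 < V t ^ ((1 - q) - 1) := rpow_pos_of_pos hVpos _
      have h3 : deriv V t * V t ^ ((1 - q) - 1) ≤ -b * V t ^ q * V t ^ ((1 - q) - 1) :=
        mul_le_mul_of_nonneg_right h1 h2.le
      have h4 : -b * V t ^ q * V t ^ ((1 - q) - 1) = -b := by
        rw [mul_assoc, ← rpow_add hVpos]
        norm_num
      have h6 : (-b * V t ^ q * V t ^ ((1 - q) - 1)) * (1 - q)
          ≤ (deriv V t * V t ^ ((1 - q) - 1)) * (1 - q) :=
        mul_le_mul_of_nonpos_right h3 (by linarith)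
      rw [h4] at h6
      calc b * (q - 1) = (-b) * (1 - q) := by ring
        _ ≤ (deriv V t * V t ^ ((1 - q) - 1)) * (1 - q) := h6
        _ = deriv V t * (1 - q) * V t ^ ((1 - q) - 1) := by ring
    have hkey := keyGe V hdiff (1 - q) (b * (q - 1)) 0 T₁ hT₁pos.le hpos hder
    have hF0 : 0 < V 0 ^ (1 - q) :=
      rpow_pos_of_pos (lt_trans one_pos (hgt 0 (Set.left_mem_Icc.2 hT₁pos.le))) _
    have hFT : V T₁ ^ (1 - q) < 1 :=
      rpow_lt_one_of_one_lt_of_neg (hgt T₁ (Set.right_mem_Icc.2 hT₁pos.le)) (by linarith)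
    have : b * (q - 1) * (T₁ - 0) = 1 := by
      rw [hT₁]; field_simp; ring
    linarith [hkey, hF0, hFT]
  obtain ⟨t₁, ht₁mem, ht₁le⟩ := phase1
  -- Phase 2: there is T ∈ [t₁, t₁ + T₂] with V T = 0
  have phase2 : ∃ T ∈ Set.Icc t₁ (t₁ + T₂), V T = 0 := by
    by_contra h
    push_neg at h
    have hpos : ∀ t ∈ Set.Icc t₁ (t₁ + T₂), 0 < V t := by
      intro t ht
      have ht0 : 0 ≤ t := le_trans ht₁mem.1 ht.1
      exact lt_of_le_of_ne (hnn t ht0) (Ne.symm (h t ht))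
    have hpos' : ∀ t ∈ Set.Icc t₁ (t₁ + T₂), V t ≠ 0 := fun t ht => (hpos t ht).ne'
    have hder : ∀ t ∈ Set.Icc t₁ (t₁ + T₂),
        deriv V t * (1 - p) * V t ^ ((1 - p) - 1) ≤ -(a * (1 - p)) := by
      intro t ht
      have hVpos := hpos t ht
      have ht0 : 0 ≤ t := le_trans ht₁mem.1 ht.1
      have h1 : deriv V t ≤ -a * V t ^ p := by
        have := hineq t ht0
        have hbq : 0 < b * V t ^ q := by positivity
        linarith
      have h2 : 0 < V t ^ ((1 - p) - 1) := rpow_pos_of_pos hVpos _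
      have h3 : deriv V t * V t ^ ((1 - p) - 1) ≤ -a * V t ^ p * V t ^ ((1 - p) - 1) :=
        mul_le_mul_of_nonneg_right h1 h2.le
      have h4 : -a * V t ^ p * V t ^ ((1 - p) - 1) = -a := by
        rw [mul_assoc, ← rpow_add hVpos]
        norm_num
      have h5 : deriv V t * (1 - p) * V t ^ ((1 - p) - 1)
          = (deriv V t * V t ^ ((1 - p) - 1)) * (1 - p) := by ring
      rw [h5]
      calc (deriv V t * V t ^ ((1 - p) - 1)) * (1 - p)
          ≤ (-a) * (1 - p) := by
            rw [← h4]
            exact mul_le_mul_of_nonneg_right h3 hp1'.le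
        _ = -(a * (1 - p)) := by ring
    have hkey := keyLe V hdiff (1 - p) (-(a * (1 - p))) t₁ (t₁ + T₂)
      (by linarith) hpos' hder
    have hFend : 0 < V (t₁ + T₂) ^ (1 - p) :=
      rpow_pos_of_pos (hpos (t₁ + T₂) (Set.right_mem_Icc.2 (by linarith))) _
    have hFst : V t₁ ^ (1 - p) ≤ 1 := by
      apply rpow_le_one (hnn t₁ ht₁mem.1) ht₁le hp1'.le
    have hval : -(a * (1 - p)) * (t₁ + T₂ - t₁) = -1 := by
      have : t₁ + T₂ - t₁ = T₂ := by ring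
      rw [this, hT₂]; field_simp
    linarith [hkey]
  obtain ⟨T, hTmem, hTzero⟩ := phase2
  refine ⟨T, le_trans ht₁mem.1 hTmem.1, ?_, hTzero⟩
  have := hTmem.2
  have := ht₁mem.2
  rw [hT₂, hT₁] at *
  linarith
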